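/- For all integers d ≥ 1 and d^⊥ ≥ 1, N(d, d^⊥) ≥ d + d^⊥ − 2. -/

import Mathlib

/-- The dual code of a binary linear code `C ⊆ GF(2)^n`. -/
def dualCode {n : ℕ} (C : Submodule (ZMod 2) (Fin n → ZMod 2)) :
    Submodule (ZMod 2) (Fin n → ZMod 2) where
  carrier := {u | ∀ v ∈ C, dotProduct u v = 0}
  zero_mem' := by intro v _; simp
  add_mem' := by
    intro a b ha hb v hv
    rw [Set.mem_setOf_eq] at *
    rw [add_dotProduct, ha v hv, hb v hv, add_zero]
  smul_mem' := by
    intro c u hu v hv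
    rw [Set.mem_setOf_eq] at *
    rw [smul_dotProduct, hu v hv, smul_zero]

/-- The minimum Hamming distance of the code `C` is at least `d`. -/
def MinDistGE {n : ℕ} (C : Submodule (ZMod 2) (Fin n → ZMod 2)) (d : ℕ) : Prop :=
  ∀ c ∈ C, c ≠ 0 → d ≤ hammingNorm c

/-- `N d d⊥` is the minimum length `n` for which there exists a binary linear code of
length `n` (a subspace `C` of `GF(2)^n` with `0 < dim C < n`) with minimum Hamming
distance at least `d` and dual distance at least `d⊥`. -/
noncomputable def N (d dp : ℕ) : ℕ :=
  sInf {n | ∃ C : Submodule (ZMod 2) (Fin n → ZMod 2),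
    0 < Module.finrank (ZMod 2) C ∧ Module.finrank (ZMod 2) C < n ∧
    MinDistGE C d ∧ MinDistGE (dualCode C) dp}

namespace RMProof

open Finset
abbrev F2 := ZMod 2
abbrev Pt (m : ℕ) := Fin m → F2
def mono {m : ℕ} (t : Pt m) : Pt m → F2 := fun p => ∏ i, (1 + t i + t i * p i)
lemma f2_cases (a : F2) : a = 0 ∨ a = 1 := by revert a; decide
lemma sum_f2 {M : Type*} [AddCommMonoid M] (φ : F2 → M) : ∑ a : F2, φ a = φ 0 + φ 1 :=
  Fin.sum_univ_two φ
lemma mono_cons {m : ℕ} (a : F2) (t : Pt m) (b : F2) (p : Pt m) :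
    mono (Fin.cons a t) (Fin.cons b p) = (1 + a + a * b) * mono t p := by
  unfold mono; rw [Fin.prod_univ_succ]; simp [Fin.cons_succ, Fin.cons_zero]
lemma hn_cons {m : ℕ} (a : F2) (t : Pt m) :
    hammingNorm (Fin.cons a t : Pt (m+1)) = (if a ≠ 0 then 1 else 0) + hammingNorm t := by
  unfold hammingNorm
  rw [Finset.card_filter, Finset.card_filter, Fin.sum_univ_succ]
  simp [Fin.cons_succ, Fin.cons_zero]

lemma key (m : ℕ) : ∀ (r : ℕ) (c : Pt m → F2), (∀ t, c t ≠ 0 → hammingNorm t ≤ r) →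
    c ≠ 0 → 2 ^ (m - r) ≤ hammingNorm (fun p : Pt m => ∑ t, c t * mono t p) := by
  induction m with
  | zero =>
    intro r c hdeg hc
    have hcd : c default ≠ 0 := by
      intro h
      exact hc (funext fun t => by rw [Subsingleton.elim t default]; simpa using h)
    have hne : (fun p : Pt 0 => ∑ t, c t * mono t p) ≠ 0 := by
      intro h
      have := congrFun h default
      simp only [Pi.zero_apply] at this
      rw [Fintype.sum_subsingleton _ default] at this
      apply hcd
      have hm : mono (default : Pt 0) default = 1 := by
        unfold mono; exact Finset.prod_of_isEmpty _
      rw [hm, mul_one] at this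
      exact this
    have h1 := hammingNorm_pos_iff.mpr hne
    rw [Nat.zero_sub, pow_zero]
    omega
  | succ m ih =>
    intro r c hdeg hc
    set g : Pt m → F2 := fun t => c (Fin.cons 0 t) with hgdef
    set h : Pt m → F2 := fun t => c (Fin.cons 1 t) with hhdef
    set G : Pt m → F2 := fun p => ∑ t, g t * mono t p with hGdef
    set H : Pt m → F2 := fun p => ∑ t, h t * mono t p with hHdef
    have hsplit : ∀ (b : F2) (p : Pt m),
        (∑ T, c T * mono T (Fin.cons b p)) = G p + b * H p := by
      intro b p
      have e1 : (∑ T, c T * mono T (Fin.cons b p))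
          = ∑ x : F2 × Pt m, c (Fin.cons x.1 x.2) * mono (Fin.cons x.1 x.2) (Fin.cons b p) :=
        (Fintype.sum_equiv (Fin.consEquiv (fun _ => F2)) _ _ (fun x => rfl)).symm
      rw [e1, Fintype.sum_prod_type, sum_f2]
      simp only [mono_cons]
      have e0 : ∀ x : F2, (1 : F2) + 0 + 0 * x = 1 := by decide
      have e2 : ∀ x : F2, (1 : F2) + 1 + 1 * x = x := by decide
      rw [hGdef, hHdef, Finset.mul_sum]
      congr 1
      · exact Finset.sum_congr rfl fun t _ => by rw [e0, one_mul]
      · exact Finset.sum_congr rfl fun t _ => by rw [e2]; ring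
    by_cases hzero : h = 0
    · -- h = 0 case
      have hgne : g ≠ 0 := by
        intro hg0
        apply hc; funext T
        have hT : T = Fin.cons (T 0) (Fin.tail T) := (Fin.cons_self_tail T).symm
        rcases f2_cases (T 0) with h0 | h1
        · rw [hT, h0]; exact congrFun hg0 (Fin.tail T)
        · rw [hT, h1]; exact congrFun hzero (Fin.tail T)
      have hgd : ∀ t, g t ≠ 0 → hammingNorm t ≤ r := by
        intro t ht
        have := hdeg (Fin.cons 0 t) ht
        rwa [hn_cons, if_neg (by simp), zero_add] at this
      have IH := ih r g hgd hgne
      rw [← hGdef] at IH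
      -- support of f = 2 * support of G
      have hval : ∀ q : Pt (m+1), (∑ T, c T * mono T q) = G (Fin.tail q) := by
        intro q
        have := hsplit (q 0) (Fin.tail q)
        rw [Fin.cons_self_tail] at this
        rw [this]
        have : H (Fin.tail q) = 0 := by
          rw [hHdef]
          simp only [hzero]
          simp
        rw [this, mul_zero, add_zero]
      have hcardeq : hammingNorm (fun q : Pt (m+1) => ∑ T, c T * mono T q)
          = 2 * hammingNorm G := by
        unfold hammingNorm
        rw [Finset.card_filter, Finset.card_filter]
        have e1 : (∑ q : Pt (m+1), if (∑ T, c T * mono T q) ≠ 0 then 1 else 0)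
            = ∑ x : F2 × Pt m, if G x.2 ≠ 0 then 1 else 0 := by
          refine (Fintype.sum_equiv (Fin.consEquiv (fun _ => F2)) _ _ (fun x => ?_)).symm
          have : (Fin.consEquiv (fun _ : Fin (m+1) => F2)) x = Fin.cons x.1 x.2 := rfl
          rw [this, hval, Fin.tail_cons]
        rw [e1, Fintype.sum_prod_type]
        rw [sum_f2 (fun _ => ∑ t : Pt m, if G t ≠ 0 then 1 else 0)]
        ring
      rw [hcardeq]
      calc 2 ^ (m + 1 - r) ≤ 2 ^ (m - r + 1) := Nat.pow_le_pow_right (by norm_num) (by omega)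
        _ = 2 * 2 ^ (m - r) := by ring
        _ ≤ 2 * hammingNorm G := by omega
    · -- h ≠ 0 case
      obtain ⟨t0, ht0⟩ : ∃ t, h t ≠ 0 := by
        by_contra hcon; push_neg at hcon
        exact hzero (funext fun t => hcon t)
      have hr1 : ∀ t, h t ≠ 0 → hammingNorm t + 1 ≤ r := by
        intro t ht
        have := hdeg (Fin.cons 1 t) ht
        rwa [hn_cons, if_pos (by decide), add_comm] at this
      have hr : 1 ≤ r := le_trans (by omega) (hr1 t0 ht0)
      have IH := ih (r - 1) h (fun t ht => by have := hr1 t ht; omega) hzero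
      rw [← hHdef] at IH
      have hinj : hammingNorm H ≤ hammingNorm (fun q : Pt (m+1) => ∑ T, c T * mono T q) := by
        unfold hammingNorm
        apply Finset.card_le_card_of_injOn (fun p => Fin.cons (1 + G p) p)
        · intro p hp
          simp only [Finset.mem_coe, Finset.mem_filter, Finset.mem_univ, true_and] at hp ⊢
          rw [hsplit]
          have h1 : H p = 1 := by
            rcases f2_cases (H p) with h' | h'
            · exact absurd h' hp
            · exact h'
          rw [h1, mul_one]
          have : ∀ x : F2, x + (1 + x) = 1 := by decide
          rw [this]
          exact one_ne_zero
        · intro p1 _ p2 _ heq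
          have := congrArg Fin.tail heq
          rwa [Fin.tail_cons, Fin.tail_cons] at this
      calc 2 ^ (m + 1 - r) ≤ 2 ^ (m - (r - 1)) := Nat.pow_le_pow_right (by norm_num) (by omega)
        _ ≤ hammingNorm H := IH
        _ ≤ _ := hinj

open Module

lemma cardPt (m : ℕ) : Fintype.card (Pt m) = 2 ^ m := by
  rw [Fintype.card_fun]
  norm_num

lemma mono_li (m : ℕ) : LinearIndependent F2 (mono (m := m)) := by
  rw [Fintype.linearIndependent_iff]
  intro c hsum i
  by_contra hci
  have hc : c ≠ 0 := fun h => hci (congrFun h i)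
  have hk := key m m c
    (fun t _ => le_trans hammingNorm_le_card_fintype (le_of_eq (Fintype.card_fin m))) hc
  have heval : (fun p : Pt m => ∑ t, c t * mono t p) = 0 := by
    funext p
    have := congrFun hsum p
    simpa [Finset.sum_apply, Pi.smul_apply, smul_eq_mul] using this
  rw [heval] at hk
  simp [hammingNorm_zero] at hk

noncomputable def B (m : ℕ) : Basis (Pt m) F2 (Pt m → F2) :=
  basisOfLinearIndependentOfCardEqFinrank (mono_li m) (by rw [Module.finrank_pi])

lemma B_eq (m : ℕ) : ⇑(B m) = mono := coe_basisOfLinearIndependentOfCardEqFinrank _ _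

def RM (m r : ℕ) : Submodule F2 (Pt m → F2) :=
  Submodule.span F2 (mono '' {t : Pt m | hammingNorm t ≤ r})

lemma mem_RM {m r : ℕ} {f : Pt m → F2} :
    f ∈ RM m r ↔ ∀ t, (B m).repr f t ≠ 0 → hammingNorm t ≤ r := by
  rw [RM, ← B_eq, Basis.mem_span_image]
  constructor
  · intro h t ht
    exact h (Finsupp.mem_support_iff.mpr ht)
  · intro h t ht
    exact h t (Finsupp.mem_support_iff.mp ht)

lemma repr_eval {m : ℕ} (f : Pt m → F2) :
    f = fun p => ∑ t, (B m).repr f t * mono t p := by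
  conv_lhs => rw [← (B m).sum_repr f]
  funext p
  rw [Finset.sum_apply]
  exact Finset.sum_congr rfl fun t _ => by rw [Pi.smul_apply, smul_eq_mul, B_eq]

lemma RM_weight {m r : ℕ} {f : Pt m → F2} (hf : f ∈ RM m r) (h0 : f ≠ 0) :
    2 ^ (m - r) ≤ hammingNorm f := by
  have hc : (fun t => (B m).repr f t) ≠ 0 := by
    intro h
    apply h0
    have : (B m).repr f = 0 := Finsupp.ext (congrFun h)
    have := congrArg (B m).repr.symm this
    rwa [LinearEquiv.symm_apply_apply, map_zero] at this
  have hk := key m r (fun t => (B m).repr f t) (fun t ht => mem_RM.mp hf t ht) hc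
  rwa [← repr_eval f] at hk

lemma dot_mono {m : ℕ} (t s : Pt m) :
    ∑ p : Pt m, mono t p * mono s p = if (∀ i, t i = 1 ∨ s i = 1) then 1 else 0 := by
  have h1 : ∀ p : Pt m, mono t p * mono s p
      = ∏ i, ((1 + t i + t i * p i) * (1 + s i + s i * p i)) := by
    intro p; rw [mono, mono, ← Finset.prod_mul_distrib]
  simp_rw [h1]
  have h2 := Finset.prod_univ_sum (fun _ : Fin m => (Finset.univ : Finset F2))
    (fun i x => (1 + t i + t i * x) * (1 + s i + s i * x))
  rw [Fintype.piFinset_univ] at h2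
  rw [← h2]
  have haux : ∀ a b : F2, (∑ x : F2, (1 + a + a * x) * (1 + b + b * x))
      = if a = 1 ∨ b = 1 then 1 else 0 := by decide
  simp_rw [haux]
  rw [Finset.prod_boole]
  simp

lemma hn_le {m : ℕ} (t : Pt m) : hammingNorm t ≤ m :=
  le_trans hammingNorm_le_card_fintype (le_of_eq (Fintype.card_fin m))

lemma dual_coeff {m r : ℕ} (u : Pt m → F2)
    (hu : ∀ s : Pt m, hammingNorm s ≤ r → ∑ p, u p * mono s p = 0) :
    ∀ t, m - r ≤ hammingNorm t → (B m).repr u t = 0 := by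
  classical
  set a : Pt m → F2 := fun t => (B m).repr u t with hadef
  have hrel : ∀ s : Pt m, hammingNorm s ≤ r →
      ∑ t ∈ Finset.univ.filter (fun t : Pt m => ∀ i, t i = 1 ∨ s i = 1), a t = 0 := by
    intro s hs
    have h1 := hu s hs
    rw [repr_eval u] at h1
    simp_rw [Finset.sum_mul] at h1
    rw [Finset.sum_comm] at h1
    have h2 : ∀ t : Pt m, (∑ p : Pt m, a t * mono t p * mono s p)
        = a t * (if (∀ i, t i = 1 ∨ s i = 1) then 1 else 0) := by
      intro t
      rw [← dot_mono, Finset.mul_sum]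
      exact Finset.sum_congr rfl fun p _ => by ring
    rw [Finset.sum_congr rfl fun t _ => h2 t] at h1
    simp_rw [mul_ite, mul_one, mul_zero] at h1
    rw [Finset.sum_ite, Finset.sum_const_zero, add_zero] at h1
    exact h1
  have hmono : ∀ t t' : Pt m, (∀ i, t i = 1 → t' i = 1) → t ≠ t' →
      hammingNorm t < hammingNorm t' := by
    intro t t' hle hne
    apply Finset.card_lt_card
    rw [Finset.ssubset_iff_subset_ne]
    constructor
    · intro i hi
      rw [Finset.mem_filter] at hi ⊢
      refine ⟨Finset.mem_univ _, ?_⟩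
      have h1 : t i = 1 := by
        rcases f2_cases (t i) with h | h
        · exact absurd h hi.2
        · exact h
      have := hle i h1
      rw [this]; exact one_ne_zero
    · intro heq
      apply hne
      funext i
      have hiff : (t i ≠ 0) ↔ (t' i ≠ 0) := by
        constructor <;> intro h
        · have : i ∈ Finset.univ.filter (fun j => t j ≠ 0) := by
            rw [Finset.mem_filter]; exact ⟨Finset.mem_univ _, h⟩
          rw [heq, Finset.mem_filter] at this; exact this.2
        · have : i ∈ Finset.univ.filter (fun j => t' j ≠ 0) := by
            rw [Finset.mem_filter]; exact ⟨Finset.mem_univ _, h⟩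
          rw [← heq, Finset.mem_filter] at this; exact this.2
      revert hiff
      have : ∀ x y : F2, ((x ≠ 0) ↔ (y ≠ 0)) → x = y := by decide
      exact this (t i) (t' i)
  have step : ∀ t : Pt m, m - r ≤ hammingNorm t →
      (∀ t' : Pt m, (∀ i, t i = 1 → t' i = 1) → t' ≠ t → a t' = 0) → a t = 0 := by
    intro t ht hstrict
    set s : Pt m := fun i => 1 + t i with hsdef
    have hns : hammingNorm s ≤ r := by
      have hcompl : Finset.univ.filter (fun i => s i ≠ 0)
          = (Finset.univ.filter (fun i => t i ≠ 0))ᶜ := by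
        ext i
        simp only [Finset.mem_filter, Finset.mem_compl, Finset.mem_univ, true_and]
        rw [hsdef]
        have : ∀ x : F2, (1 + x ≠ 0) ↔ ¬ (x ≠ 0) := by decide
        exact this (t i)
      have : hammingNorm s = m - hammingNorm t := by
        unfold hammingNorm
        rw [hcompl, Finset.card_compl, Fintype.card_fin]
      rw [this]
      have := hn_le t
      omega
    have h0 := hrel s hns
    have hcond : ∀ t' : Pt m, (∀ i, t' i = 1 ∨ s i = 1) ↔ (∀ i, t i = 1 → t' i = 1) := by
      intro t'
      have haux : ∀ x y : F2, (y = 1 ∨ 1 + x = 1) ↔ (x = 1 → y = 1) := by decide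
      constructor <;> intro H i
      · intro hti
        have := H i
        rw [hsdef] at this
        exact (haux (t i) (t' i)).mp this hti
      · rw [hsdef]
        exact (haux (t i) (t' i)).mpr (H i)
    have htmem : t ∈ Finset.univ.filter (fun t' : Pt m => ∀ i, t' i = 1 ∨ s i = 1) := by
      rw [Finset.mem_filter]
      exact ⟨Finset.mem_univ _, (hcond t).mpr (fun i h => h)⟩
    rw [← Finset.add_sum_erase _ _ htmem] at h0
    have hrest : ∑ t' ∈ (Finset.univ.filter
        (fun t' : Pt m => ∀ i, t' i = 1 ∨ s i = 1)).erase t, a t' = 0 := by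
      apply Finset.sum_eq_zero
      intro t' ht'
      rw [Finset.mem_erase, Finset.mem_filter] at ht'
      exact hstrict t' ((hcond t').mp ht'.2.2) ht'.1
    rw [hrest, add_zero] at h0
    exact h0
  have main : ∀ k (t : Pt m), m - r ≤ hammingNorm t → m - hammingNorm t ≤ k → a t = 0 := by
    intro k
    induction k with
    | zero =>
      intro t h1 h2
      apply step t h1
      intro t' hle hne
      exfalso
      have := hmono t t' hle (Ne.symm hne)
      have := hn_le t'
      omega
    | succ k ihk =>
      intro t h1 h2
      apply step t h1
      intro t' hle hne
      have hlt := hmono t t' hle (Ne.symm hne)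
      have ht'le := hn_le t'
      exact ihk t' (by omega) (by omega)
  intro t ht
  exact main m t ht (by omega)

lemma mono_mem_RM {m r : ℕ} {s : Pt m} (hs : hammingNorm s ≤ r) : mono s ∈ RM m r :=
  Submodule.subset_span ⟨s, hs, rfl⟩

lemma dual_in_RM {m r : ℕ} (hrm : r < m) (u : Pt m → F2)
    (hu : ∀ f ∈ RM m r, ∑ p, u p * f p = 0) : u ∈ RM m (m - r - 1) := by
  apply mem_RM.mpr
  intro t hne
  by_contra hgt
  have hge : m - r ≤ hammingNorm t := by omega
  exact hne (dual_coeff u (fun s hs => hu (mono s) (mono_mem_RM hs)) t hge)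

lemma hn_comp_equiv {α β : Type*} [Fintype α] [Fintype β] [DecidableEq α] [DecidableEq β]
    (e : α ≃ β) (f : β → F2) : hammingNorm (fun a => f (e a)) = hammingNorm f := by
  unfold hammingNorm
  apply Finset.card_bij' (fun a _ => e a) (fun b _ => e.symm b)
  · intro a ha
    simp only [Finset.mem_filter, Finset.mem_univ, true_and] at ha ⊢
    exact ha
  · intro b hb
    simp only [Finset.mem_filter, Finset.mem_univ, true_and] at hb ⊢
    rw [Equiv.apply_symm_apply]
    exact hb
  · intro a _; exact e.symm_apply_apply a
  · intro b _; exact e.apply_symm_apply b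

lemma RM_ne_top {m r : ℕ} (hrm : r < m) : RM m r ≠ ⊤ := by
  intro htop
  have hmem : mono (fun _ => 1 : Pt m) ∈ RM m r := htop ▸ Submodule.mem_top
  have hrep := mem_RM.mp hmem (fun _ => 1)
  have hr1 : (B m).repr (mono (fun _ => 1 : Pt m)) (fun _ => 1) = 1 := by
    have : mono (fun _ => 1 : Pt m) = B m (fun _ => 1) := by rw [B_eq]
    rw [this, Basis.repr_self, Finsupp.single_eq_same]
  rw [hr1] at hrep
  have hhn : hammingNorm (fun _ => 1 : Pt m) = m := by
    unfold hammingNorm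
    rw [Finset.filter_true_of_mem (fun i _ => one_ne_zero), Finset.card_univ, Fintype.card_fin]
  have := hrep one_ne_zero
  omega

lemma RM_ne_bot (m r : ℕ) : ∃ f ∈ RM m r, f ≠ 0 := by
  refine ⟨mono (fun _ => 0 : Pt m), mono_mem_RM ?_, ?_⟩
  · have : hammingNorm (fun _ => 0 : Pt m) = 0 := by
      simp [hammingNorm]
    omega
  · intro h
    have := congrFun h (fun _ => 0)
    unfold mono at this
    simp at this

lemma exists_good (d dp : ℕ) (hd : 1 ≤ d) (hdp : 1 ≤ dp) :
    ∃ (n : ℕ) (C : Submodule F2 (Fin n → F2)),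
      0 < Module.finrank F2 C ∧ Module.finrank F2 C < n ∧ MinDistGE C d ∧
        MinDistGE (dualCode C) dp := by
  classical
  set a := max 1 (Nat.clog 2 dp) with hadef
  set b := Nat.clog 2 d with hbdef
  set m := a + b with hmdef
  set r := a - 1 with hrdef
  have ha1 : 1 ≤ a := le_max_left _ _
  have hdpa : dp ≤ 2 ^ a :=
    le_trans (Nat.le_pow_clog (by norm_num) dp)
      (Nat.pow_le_pow_right (by norm_num) (le_max_right _ _))
  have hdb : d ≤ 2 ^ (b + 1) :=
    le_trans (Nat.le_pow_clog (by norm_num) d) (Nat.pow_le_pow_right (by norm_num) (by omega))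
  have hrm : r < m := by omega
  set n := 2 ^ m with hndef
  have hcard : Fintype.card (Pt m) = n := cardPt m
  set e : Fin n ≃ Pt m := (Fintype.equivFinOfCardEq hcard).symm with hedef
  set Φ := LinearEquiv.funCongrLeft F2 F2 e with hΦdef
  have hΦapp : ∀ f : Pt m → F2, Φ f = fun i => f (e i) := fun f => rfl
  refine ⟨n, Submodule.map (Φ : (Pt m → F2) →ₗ[F2] (Fin n → F2)) (RM m r), ?_, ?_, ?_, ?_⟩
  · rw [LinearEquiv.finrank_map_eq]
    rw [Module.finrank_pos_iff]
    obtain ⟨f, hf, hfne⟩ := RM_ne_bot m r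
    exact ⟨⟨f, hf⟩, 0, fun hcon => hfne (by simpa using congrArg Subtype.val hcon)⟩
  · rw [LinearEquiv.finrank_map_eq]
    calc Module.finrank F2 (RM m r) < Module.finrank F2 (Pt m → F2) :=
          Submodule.finrank_lt (RM_ne_top hrm)
      _ = n := by rw [Module.finrank_pi, hcard]
  · intro c hc hc0
    obtain ⟨f, hf, rfl⟩ := Submodule.mem_map.mp hc
    have hfne : f ≠ 0 := by
      intro h; apply hc0; rw [h, map_zero]
    have hw := RM_weight hf hfne
    have hmr : m - r = b + 1 := by omega
    rw [hmr] at hw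
    have hnorm : hammingNorm ((Φ : (Pt m → F2) →ₗ[F2] (Fin n → F2)) f) = hammingNorm f := by
      have : ((Φ : (Pt m → F2) →ₗ[F2] (Fin n → F2)) f) = fun i => f (e i) := rfl
      rw [this, hn_comp_equiv]
    rw [hnorm]
    omega
  · intro u hu hu0
    set u' : Pt m → F2 := fun p => u (e.symm p) with hu'def
    have hu'perp : ∀ f ∈ RM m r, ∑ p, u' p * f p = 0 := by
      intro f hf
      have hmem : (Φ : (Pt m → F2) →ₗ[F2] (Fin n → F2)) f
          ∈ Submodule.map (Φ : (Pt m → F2) →ₗ[F2] (Fin n → F2)) (RM m r) :=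
        Submodule.mem_map.mpr ⟨f, hf, rfl⟩
      have hdot := hu _ hmem
      have : dotProduct u ((Φ : (Pt m → F2) →ₗ[F2] (Fin n → F2)) f)
          = ∑ p, u' p * f p := by
        rw [dotProduct]
        rw [← Equiv.sum_comp e (fun p => u' p * f p)]
        apply Finset.sum_congr rfl
        intro i _
        have h1 : u' (e i) = u i := by rw [hu'def]; simp
        have h2 : ((Φ : (Pt m → F2) →ₗ[F2] (Fin n → F2)) f) i = f (e i) := rfl
        rw [h1, h2]
      rwa [this] at hdot
    have hu'ne : u' ≠ 0 := by
      intro h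
      apply hu0
      funext i
      have := congrFun h (e i)
      rw [hu'def] at this
      simpa using this
    have hmem' := dual_in_RM hrm u' hu'perp
    have hw := RM_weight hmem' hu'ne
    have hmr : m - (m - r - 1) = a := by omega
    rw [hmr] at hw
    have hnorm : hammingNorm u' = hammingNorm u := hn_comp_equiv e.symm u
    omega

lemma shorten {n : ℕ} (D : Submodule F2 (Fin n → F2)) {d : ℕ} (hd : 1 ≤ d)
    (hmd : ∀ c ∈ D, c ≠ 0 → d ≤ hammingNorm c) (hne : ∃ c ∈ D, c ≠ 0) :
    Module.finrank F2 D + d ≤ n + 1 := by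
  classical
  obtain ⟨c0, hc0, hc0ne⟩ := hne
  have hdn : d ≤ n :=
    le_trans (hmd c0 hc0 hc0ne)
      (le_trans hammingNorm_le_card_fintype (le_of_eq (Fintype.card_fin n)))
  obtain ⟨s, _, hcard⟩ := Finset.exists_subset_card_eq
    (show d - 1 ≤ (Finset.univ : Finset (Fin n)).card by
      rw [Finset.card_univ, Fintype.card_fin]; omega)
  set φ : (Fin n → F2) →ₗ[F2] ({ x // x ∈ sᶜ } → F2) :=
    LinearMap.funLeft F2 F2 (fun i => (i : Fin n)) with hφdef
  have hinj : Function.Injective (φ.comp D.subtype) := by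
    rw [← LinearMap.ker_eq_bot]
    rw [LinearMap.ker_eq_bot']
    rintro ⟨c, hc⟩ hzero
    have hsupp : ∀ i, c i ≠ 0 → i ∈ s := by
      intro i hi
      by_contra his
      have hmem : i ∈ sᶜ := Finset.mem_compl.mpr his
      have := congrFun hzero ⟨i, hmem⟩
      exact hi this
    have hle : hammingNorm c ≤ d - 1 := by
      have : Finset.univ.filter (fun i => c i ≠ 0) ⊆ s := by
        intro i hi
        rw [Finset.mem_filter] at hi
        exact hsupp i hi.2
      calc hammingNorm c ≤ s.card := Finset.card_le_card this
        _ = d - 1 := hcard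
    have hzero' : c = 0 := by
      by_contra hcne
      have := hmd c hc hcne
      omega
    exact Subtype.ext hzero'
  have hle := LinearMap.finrank_le_finrank_of_injective hinj
  rw [Module.finrank_pi, Fintype.card_coe, Finset.card_compl, Fintype.card_fin, hcard] at hle
  omega

lemma rank_dual_lower {n : ℕ} (C : Submodule F2 (Fin n → F2)) :
    n ≤ Module.finrank F2 C + Module.finrank F2 (dualCode C) := by
  classical
  set ψ : (Fin n → F2) →ₗ[F2] Module.Dual F2 C :=
    { toFun := fun v =>
        { toFun := fun c => dotProduct v c.val
          map_add' := by
            intro x y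
            simp [dotProduct_add]
          map_smul' := by
            intro r x
            simp [dotProduct_smul] }
      map_add' := by
        intro x y
        ext c
        simp [add_dotProduct]
      map_smul' := by
        intro r x
        ext c
        simp [smul_dotProduct] } with hψdef
  have hker : LinearMap.ker ψ = dualCode C := by
    ext v
    rw [LinearMap.mem_ker]
    constructor
    · intro h w hw
      have := congrFun (congrArg DFunLike.coe h) ⟨w, hw⟩
      simpa [hψdef] using this
    · intro h
      ext c
      simpa [hψdef] using h c.val c.property
  have hrn := LinearMap.finrank_range_add_finrank_ker ψ
  rw [Module.finrank_pi, Fintype.card_fin] at hrn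
  have hr2 : Module.finrank F2 (LinearMap.range ψ) ≤ Module.finrank F2 C := by
    have hr : Module.finrank F2 (LinearMap.range ψ)
        ≤ Module.finrank F2 (Module.Dual F2 C) := Submodule.finrank_le _
    rwa [Subspace.dual_finrank_eq] at hr
  calc n = Module.finrank F2 (LinearMap.range ψ) + Module.finrank F2 (LinearMap.ker ψ) :=
        hrn.symm
    _ = Module.finrank F2 (LinearMap.range ψ) + Module.finrank F2 (dualCode C) := by rw [hker]
    _ ≤ Module.finrank F2 C + Module.finrank F2 (dualCode C) := Nat.add_le_add_right hr2 _

lemma mem_bound {n d dp : ℕ} (hd : 1 ≤ d) (hdp : 1 ≤ dp)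
    (C : Submodule F2 (Fin n → F2)) (h1 : 0 < Module.finrank F2 C)
    (h2 : Module.finrank F2 C < n) (h3 : MinDistGE C d) (h4 : MinDistGE (dualCode C) dp) :
    d + dp - 2 ≤ n := by
  have hCne : ∃ c ∈ C, c ≠ 0 := by
    by_contra hno
    push_neg at hno
    have : C = ⊥ := (Submodule.eq_bot_iff _).mpr hno
    rw [this, finrank_bot] at h1
    omega
  have hA : Module.finrank F2 C + d ≤ n + 1 := shorten C hd h3 hCne
  have hS4 : n ≤ Module.finrank F2 C + Module.finrank F2 (dualCode C) := rank_dual_lower C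
  have hdualne : ∃ u ∈ dualCode C, u ≠ 0 := by
    by_contra hno
    push_neg at hno
    have hbot : dualCode C = ⊥ := (Submodule.eq_bot_iff _).mpr hno
    have h0 : Module.finrank F2 (dualCode C) = 0 := by rw [hbot]; exact finrank_bot _ _
    omega
  have hB : Module.finrank F2 (dualCode C) + dp ≤ n + 1 :=
    shorten (dualCode C) hdp h4 hdualne
  omega

end RMProof

theorem N_ge_singleton (d dp : ℕ) (hd : 1 ≤ d) (hdp : 1 ≤ dp) :
    N d dp ≥ d + dp - 2 := by
  have hne : {n | ∃ C : Submodule (ZMod 2) (Fin n → ZMod 2),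
      0 < Module.finrank (ZMod 2) C ∧ Module.finrank (ZMod 2) C < n ∧
      MinDistGE C d ∧ MinDistGE (dualCode C) dp}.Nonempty := by
    obtain ⟨n, C, h1, h2, h3, h4⟩ := RMProof.exists_good d dp hd hdp
    exact ⟨n, C, h1, h2, h3, h4⟩
  have hmem := Nat.sInf_mem hne
  obtain ⟨C, h1, h2, h3, h4⟩ := hmem
  exact RMProof.mem_bound hd hdp C h1 h2 h3 h4
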